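/- arXiv:math/0604109 — 4 statements merged into one kernel-verified Lean document; each statement's English description precedes it below -/
import Mathlib

section
/- Let n_1, …, n_p be integers ≥ 2, let Λ be the multiplicative subgroup of ℝ_{>0} generated by n_1, …, n_p, let m = lcm(n_1, …, n_p), A = ℤ[1/m], and d = gcd(n_1 − 1, …, n_p − 1). Then the additive subgroup of ℝ generated by { (1 − λ)a : λ ∈ Λ, a ∈ A } is equal to dA = { d·a : a ∈ A }. -/
open Filter Topology Set

/-- The right derivative of `f` at `x`. -/
noncomputable def rDeriv (f : ℝ → ℝ) (x : ℝ) : ℝ := derivWithin f (Set.Ici x) x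

/-- The left derivative of `f` at `x`. -/
noncomputable def lDeriv (f : ℝ → ℝ) (x : ℝ) : ℝ := derivWithin f (Set.Iic x) x

/-- `x` is a break point of `f`: the one-sided slopes at `x` differ. -/
def IsBreak (f : ℝ → ℝ) (x : ℝ) : Prop := rDeriv f x ≠ lDeriv f x

/-- The jump of `f` at `x` : the ratio of the right and left derivatives. -/
noncomputable def jumpRatio (f : ℝ → ℝ) (x : ℝ) : ℝ := rDeriv f x / lDeriv f x

/-- `f : ℝ → ℝ` is (the lift of) an orientation-preserving piecewise linear
homeomorphism of the circle `S_r = ℝ/rℤ` : it is strictly increasing, commutes with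
the translation by `r`, and is affine on each interval of a finite subdivision
`0 = a 0 < a 1 < ⋯ < a k = r`. -/
def IsPLplus (r : ℝ) (f : ℝ → ℝ) : Prop :=
  StrictMono f ∧ Continuous f ∧ (∀ x, f (x + r) = f x + r) ∧
    ∃ (k : ℕ) (a : ℕ → ℝ), 1 ≤ k ∧ a 0 = 0 ∧ a k = r ∧
      (∀ i, i < k → a i < a (i + 1)) ∧
      (∀ i, i < k → ∃ lam c : ℝ, 0 < lam ∧
        ∀ x ∈ Set.Icc (a i) (a (i + 1)), f x = lam * x + c)

/-- `f : ℝ → ℝ` is (the lift of) an orientation-reversing piecewise linear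
homeomorphism of the circle `S_r = ℝ/rℤ`. -/
def IsPLminus (r : ℝ) (f : ℝ → ℝ) : Prop :=
  StrictAnti f ∧ Continuous f ∧ (∀ x, f (x + r) = f x - r) ∧
    ∃ (k : ℕ) (a : ℕ → ℝ), 1 ≤ k ∧ a 0 = 0 ∧ a k = r ∧
      (∀ i, i < k → a i < a (i + 1)) ∧
      (∀ i, i < k → ∃ lam c : ℝ, lam < 0 ∧
        ∀ x ∈ Set.Icc (a i) (a (i + 1)), f x = lam * x + c)

/-- `f` is (the lift of) a piecewise linear homeomorphism of the circle `S_r`,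
orientation-preserving or orientation-reversing. -/
def IsPLany (r : ℝ) (f : ℝ → ℝ) : Prop := IsPLplus r f ∨ IsPLminus r f

/-- All slopes of `f` lie in `Λ`. -/
def SlopesIn (L : Set ℝ) (f : ℝ → ℝ) : Prop := ∀ x : ℝ, rDeriv f x ∈ L

/-- `x` lies in `A` modulo `rℤ`. -/
def InModR (r : ℝ) (A : Set ℝ) (x : ℝ) : Prop := ∃ n : ℤ, x - n * r ∈ A

/-- All break points of `f` and their images lie in `A` (mod `rℤ`). -/
def BreaksIn (r : ℝ) (A : Set ℝ) (f : ℝ → ℝ) : Prop :=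
  ∀ x : ℝ, IsBreak f x → InModR r A x ∧ InModR r A (f x)

/-- `ℤ[1/m]` as a subset of `ℝ`. -/
def Zinv (m : ℕ) : Set ℝ := {a : ℝ | ∃ (p : ℤ) (k : ℕ), a = (p : ℝ) / (m : ℝ) ^ k}

/-- The set of integer powers of `m`, as a subset of `ℝ`. -/
def powersOf (m : ℕ) : Set ℝ := {y : ℝ | ∃ n : ℤ, y = (m : ℝ) ^ n}

/-- Membership in the Thompson group `T_{r,m}` (at the level of lifts):
slopes are integer powers of `m`, break points and their images lie in `ℤ[1/m]`. -/
def memT (r : ℝ) (m : ℕ) (f : ℝ → ℝ) : Prop :=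
  IsPLplus r f ∧ SlopesIn (powersOf m) f ∧ BreaksIn r (Zinv m) f

/-- The multiplicative subgroup of `ℝ` generated by the integers `n 0, …, n (p-1)`. -/
def LambdaSet (p : ℕ) (n : Fin p → ℕ) : Set ℝ :=
  {x : ℝ | ∃ g : Fin p → ℤ, x = ∏ i, (n i : ℝ) ^ (g i)}

/-- Membership in the Thompson–Stein group `T_{r,(n_1,…,n_p)}` (at the level of lifts):
slopes lie in `⟨n_1,…,n_p⟩`, break points and their images lie in `ℤ[1/m]`,
`m = lcm (n_i)`. -/
def memTS (r : ℝ) (p : ℕ) (n : Fin p → ℕ) (f : ℝ → ℝ) : Prop :=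
  IsPLplus r f ∧ SlopesIn (LambdaSet p n) f ∧
    BreaksIn r (Zinv (Finset.lcm Finset.univ n)) f

/-- `ρ` is (a representative of) the rotation number of the circle map with lift `f`:
`ρ = lim f̃ⁿ(0)/(r n)`. -/
def HasRotNum (r : ℝ) (f : ℝ → ℝ) (ρ : ℝ) : Prop :=
  Filter.Tendsto (fun nn : ℕ => f^[nn] 0 / (r * nn)) Filter.atTop (nhds ρ)

/-- `g` is a lift of the identity of the circle `ℝ/rℤ`, i.e. a translation by a
multiple of `r`. -/
def IsCircleId (r : ℝ) (g : ℝ → ℝ) : Prop := ∃ n : ℤ, ∀ x : ℝ, g x = x + n * r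

/-- The permutation `e` of the circle `ℝ/rℤ` is an element of the Thompson group
`T_{r,m}`. -/
def InTcirc (r : ℝ) (m : ℕ) (e : Equiv.Perm (AddCircle r)) : Prop :=
  ∃ f : ℝ → ℝ, memT r m f ∧ ∀ x : ℝ, e (x : AddCircle r) = ((f x : ℝ) : AddCircle r)

/-- The permutation `e` of the circle `ℝ/rℤ` is an element of the Thompson–Stein
group `T_{r,(n_1,…,n_p)}`. -/
def InTScirc (r : ℝ) (p : ℕ) (n : Fin p → ℕ) (e : Equiv.Perm (AddCircle r)) : Prop :=
  ∃ f : ℝ → ℝ, memTS r p n f ∧ ∀ x : ℝ, e (x : AddCircle r) = ((f x : ℝ) : AddCircle r)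


section Aux

private lemma bezout_aux {ι : Type*} (s : Finset ι) (f : ι → ℕ) :
    ∃ c : ι → ℤ, ((s.gcd f : ℕ) : ℤ) = ∑ i ∈ s, c i * (f i : ℤ) := by
  classical
  induction s using Finset.induction_on with
  | empty => exact ⟨0, by simp⟩
  | @insert a s ha ih =>
    obtain ⟨c, hc⟩ := ih
    set A : ℤ := Int.gcdA ((f a : ℕ) : ℤ) ((s.gcd f : ℕ) : ℤ) with hA
    set B : ℤ := Int.gcdB ((f a : ℕ) : ℤ) ((s.gcd f : ℕ) : ℤ) with hB
    refine ⟨fun i => if i = a then A else B * c i, ?_⟩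
    have h1 : ((Nat.gcd (f a) (Finset.gcd s f) : ℕ) : ℤ)
        = (f a : ℤ) * A + ((Finset.gcd s f : ℕ) : ℤ) * B := by
      rw [hA, hB, ← Int.gcd_natCast_natCast, Int.gcd_eq_gcd_ab]
    have h2 : ∑ i ∈ s, (if i = a then A else B * c i) * (f i : ℤ)
        = B * ∑ i ∈ s, c i * (f i : ℤ) := by
      rw [Finset.mul_sum]
      refine Finset.sum_congr rfl fun i hi => ?_
      rw [if_neg (fun h : i = a => ha (h ▸ hi))]; ring
    rw [Finset.gcd_insert, Finset.sum_insert ha]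
    simp only []
    rw [if_pos trivial, h2, ← hc]
    have hg : GCDMonoid.gcd (f a) (Finset.gcd s f) = Nat.gcd (f a) (Finset.gcd s f) := rfl
    rw [hg, h1]; ring

private lemma dvd_prod_sub_one {ι : Type*} (s : Finset ι) (f : ι → ℤ) (d : ℤ)
    (h : ∀ i ∈ s, d ∣ f i - 1) : d ∣ (∏ i ∈ s, f i) - 1 := by
  classical
  induction s using Finset.induction_on with
  | empty => simp
  | @insert a s ha ih =>
    rw [Finset.prod_insert ha]
    have h1 : d ∣ f a - 1 := h a (Finset.mem_insert_self a s)
    have h2 : d ∣ (∏ i ∈ s, f i) - 1 := ih fun i hi => h i (Finset.mem_insert_of_mem hi)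
    have : f a * (∏ i ∈ s, f i) - 1
        = f a * ((∏ i ∈ s, f i) - 1) + (f a - 1) := by ring
    rw [this]
    exact dvd_add (h2.mul_left _) h1

end Aux

/-- the additive subgroup of `ℝ` generated by `(1-Λ)A` equals `dA`,
where `Λ = ⟨n_1,…,n_p⟩`, `A = ℤ[1/lcm(n_i)]` and `d = gcd(n_i - 1)`. -/
theorem stmt8 (p : ℕ) (hp : 1 ≤ p) (n : Fin p → ℕ) (hn : ∀ i, 2 ≤ n i) :
    (AddSubgroup.closure {x : ℝ | ∃ lam ∈ LambdaSet p n,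
        ∃ a ∈ Zinv (Finset.lcm Finset.univ n), x = (1 - lam) * a} : Set ℝ) =
      {x : ℝ | ∃ a ∈ Zinv (Finset.lcm Finset.univ n),
        x = ((Finset.gcd Finset.univ fun i => n i - 1 : ℕ) : ℝ) * a} := by
  classical
  set m : ℕ := Finset.lcm Finset.univ n with hmdef
  set d : ℕ := Finset.gcd Finset.univ (fun i => n i - 1) with hddef
  have hm0 : m ≠ 0 := by
    rw [hmdef, Ne, Finset.lcm_eq_zero_iff]
    rintro ⟨i, -, hi⟩
    have := hn i; omega
  have hmR : (m : ℝ) ≠ 0 := Nat.cast_ne_zero.mpr hm0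
  have hd0 : d ≠ 0 := by
    intro h
    have h1 := Finset.gcd_eq_zero_iff.mp h ⟨0, hp⟩ (Finset.mem_univ _)
    have := hn ⟨0, hp⟩; omega
  have hddvd : ∀ i : Fin p, (d : ℤ) ∣ (n i : ℤ) - 1 := by
    intro i
    have h1 : d ∣ n i - 1 := Finset.gcd_dvd (Finset.mem_univ i)
    have h2 : ((n i - 1 : ℕ) : ℤ) = (n i : ℤ) - 1 := by
      have := hn i; omega
    exact h2 ▸ Int.natCast_dvd_natCast.mpr h1
  -- the target as an additive subgroup
  have hZadd : ∀ a b : ℝ, a ∈ Zinv m → b ∈ Zinv m → a + b ∈ Zinv m := by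
    rintro a b ⟨q, k, rfl⟩ ⟨q', k', rfl⟩
    refine ⟨q * (m : ℕ) ^ k' + q' * (m : ℕ) ^ k, k + k', ?_⟩
    push_cast
    rw [pow_add]
    field_simp
  have hZneg : ∀ a : ℝ, a ∈ Zinv m → -a ∈ Zinv m := by
    rintro a ⟨q, k, rfl⟩
    exact ⟨-q, k, by push_cast; ring⟩
  let S : AddSubgroup ℝ :=
    { carrier := {x : ℝ | ∃ a ∈ Zinv m, x = (d : ℝ) * a}
      zero_mem' := ⟨0, ⟨0, 0, by simp⟩, by simp⟩
      add_mem' := by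
        rintro x y ⟨a, ha, rfl⟩ ⟨b, hb, rfl⟩
        exact ⟨a + b, hZadd _ _ ha hb, by ring⟩
      neg_mem' := by
        rintro x ⟨a, ha, rfl⟩
        exact ⟨-a, hZneg _ ha, by ring⟩ }
  apply Set.Subset.antisymm
  · -- closure ⊆ dA
    have hgen : {x : ℝ | ∃ lam ∈ LambdaSet p n,
        ∃ a ∈ Zinv m, x = (1 - lam) * a} ⊆ (S : Set ℝ) := by
      rintro x ⟨lam, ⟨g, rfl⟩, a, ⟨q, k, rfl⟩, rfl⟩
      set P : ℕ := ∏ i, n i ^ (g i).toNat with hP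
      set Q : ℕ := ∏ i, n i ^ (-(g i)).toNat with hQ
      set K : ℕ := ∑ i, (-(g i)).toNat with hK
      have hQpos : 0 < Q := Finset.prod_pos fun i _ => pow_pos (by have := hn i; omega) _
      have hQR : (Q : ℝ) ≠ 0 := Nat.cast_ne_zero.mpr hQpos.ne'
      have hlamQ : (∏ i, (n i : ℝ) ^ (g i)) * (Q : ℝ) = (P : ℝ) := by
        rw [hP, hQ]
        push_cast
        rw [← Finset.prod_mul_distrib]
        refine Finset.prod_congr rfl fun i _ => ?_
        have hni : (n i : ℝ) ≠ 0 := by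
          have := hn i; positivity
        rw [← zpow_natCast ((n i : ℝ)) ((-(g i)).toNat), ← zpow_add₀ hni,
          ← zpow_natCast ((n i : ℝ)) ((g i).toNat)]
        congr 1
        omega
      have hQdvd : Q ∣ m ^ K := by
        have h1 : Q ∣ ∏ i, m ^ ((-(g i)).toNat) :=
          Finset.prod_dvd_prod_of_dvd _ _ fun i _ =>
            pow_dvd_pow_of_dvd (Finset.dvd_lcm (Finset.mem_univ i)) _
        rwa [Finset.prod_pow_eq_pow_sum] at h1
      have hfac : ∀ (i : Fin p) (e : ℕ), (d : ℤ) ∣ (n i : ℤ) ^ e - 1 := by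
        intro i e
        have h := sub_dvd_pow_sub_pow ((n i : ℤ)) 1 e
        rw [one_pow] at h
        exact (hddvd i).trans h
      have hdQP : (d : ℤ) ∣ (Q : ℤ) - (P : ℤ) := by
        have hQ1 : (d : ℤ) ∣ (Q : ℤ) - 1 := by
          rw [hQ]; push_cast
          exact dvd_prod_sub_one _ _ _ fun i _ => hfac i _
        have hP1 : (d : ℤ) ∣ (P : ℤ) - 1 := by
          rw [hP]; push_cast
          exact dvd_prod_sub_one _ _ _ fun i _ => hfac i _
        have h : (Q : ℤ) - (P : ℤ) = ((Q : ℤ) - 1) - ((P : ℤ) - 1) := by ring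
        rw [h]; exact dvd_sub hQ1 hP1
      set t : ℤ := ((Q : ℤ) - (P : ℤ)) / d with ht
      have hdt : (d : ℤ) * t = (Q : ℤ) - (P : ℤ) := Int.mul_ediv_cancel' hdQP
      set u : ℕ := m ^ K / Q with hu
      have hQu : Q * u = m ^ K := Nat.mul_div_cancel' hQdvd
      refine ⟨((t * u * q : ℤ) : ℝ) / (m : ℝ) ^ (K + k), ⟨t * u * q, K + k, rfl⟩, ?_⟩
      have hdtR : (d : ℝ) * (t : ℝ) = (Q : ℝ) - (P : ℝ) := by exact_mod_cast hdt
      have hQuR : (Q : ℝ) * (u : ℝ) = (m : ℝ) ^ K := by exact_mod_cast hQu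
      have hlam : (∏ i, (n i : ℝ) ^ (g i)) = (P : ℝ) / (Q : ℝ) := by
        rw [eq_div_iff hQR]; exact hlamQ
      rw [hlam]
      push_cast
      rw [pow_add]
      field_simp
      linear_combination (-(q : ℝ) * (m : ℝ) ^ K) * hdtR +
        (-(d : ℝ) * (t : ℝ) * (q : ℝ)) * hQuR
    intro x hx
    exact (AddSubgroup.closure_le S).mpr hgen hx
  · -- dA ⊆ closure
    rintro x ⟨a, ⟨q, k, rfl⟩, rfl⟩
    obtain ⟨c, hc⟩ := bezout_aux (Finset.univ : Finset (Fin p)) (fun i => n i - 1)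
    have hgen_i : ∀ i : Fin p, ((1 : ℝ) - (n i : ℝ)) * ((q : ℝ) / (m : ℝ) ^ k) ∈
        AddSubgroup.closure {x : ℝ | ∃ lam ∈ LambdaSet p n,
          ∃ a ∈ Zinv m, x = (1 - lam) * a} := by
      intro i
      refine AddSubgroup.subset_closure ⟨(n i : ℝ), ⟨fun j => if j = i then 1 else 0, ?_⟩,
        (q : ℝ) / (m : ℝ) ^ k, ⟨q, k, rfl⟩, rfl⟩
      rw [Finset.prod_eq_single i (fun j _ hj => by simp [hj]) (by simp)]
      simp
    have hcR : (d : ℝ) = ∑ i, (c i : ℝ) * ((n i : ℝ) - 1) := by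
      have hcZ : (d : ℤ) = ∑ i, c i * ((n i : ℤ) - 1) := by
        rw [hc]
        refine Finset.sum_congr rfl fun i _ => ?_
        have : ((n i - 1 : ℕ) : ℤ) = (n i : ℤ) - 1 := by have := hn i; omega
        rw [this]
      exact_mod_cast congrArg (fun z : ℤ => (z : ℝ)) hcZ
    have hx : (d : ℝ) * ((q : ℝ) / (m : ℝ) ^ k)
        = ∑ i, (-(c i)) • (((1 : ℝ) - (n i : ℝ)) * ((q : ℝ) / (m : ℝ) ^ k)) := by
      simp only [zsmul_eq_mul]
      rw [hcR, Finset.sum_mul]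
      refine Finset.sum_congr rfl fun i _ => ?_
      push_cast
      ring
    rw [hx]
    exact AddSubgroup.sum_mem _ fun i _ => AddSubgroup.zsmul_mem _ (hgen_i i) _
end

section
/- Let n_1, …, n_p be integers ≥ 2 and let d = gcd(n_1 − 1, …, n_p − 1). Then there exist positive integers α_1, …, α_p such that, setting Π = n_1^{α_1} · n_2^{α_2} ⋯ n_p^{α_p}, the integer d divides Π − 1 and gcd((Π − 1)/d, d) = 1. -/
open Filter Topology Set

private lemma aux_pow_one_add {R : Type*} [CommRing R] (e : R) (he : e * e = 0) (k : ℕ) :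
    (1 + e) ^ k = 1 + k * e := by
  induction k with
  | zero => simp
  | succ k ih =>
    rw [pow_succ, ih]
    push_cast
    linear_combination (k : R) * he

private lemma aux_prod_one_add {ι : Type*} [DecidableEq ι] {R : Type*} [CommRing R]
    (s : Finset ι) (d : R) (hd : d * d = 0) (f : ι → R) :
    (∏ i ∈ s, (1 + d * f i)) = 1 + d * ∑ i ∈ s, f i := by
  induction s using Finset.induction with
  | empty => simp
  | @insert a s hne ih =>
    rw [Finset.prod_insert hne, ih, Finset.sum_insert hne]
    linear_combination (f a * ∑ i ∈ s, f i) * hd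

private lemma aux_bezout {ι : Type*} [DecidableEq ι] (s : Finset ι) (f : ι → ℤ) :
    ∃ c : ι → ℤ, ∑ i ∈ s, c i * f i = (s.gcd f : ℤ) := by
  induction s using Finset.induction with
  | empty => exact ⟨0, by simp⟩
  | @insert a s hne ih =>
    obtain ⟨c, hc⟩ := ih
    refine ⟨fun i => if i = a then Int.gcdA (f a) (s.gcd f) else
      c i * Int.gcdB (f a) (s.gcd f), ?_⟩
    rw [Finset.sum_insert hne, Finset.gcd_insert]
    simp only [if_pos rfl]
    rw [Finset.sum_congr rfl (fun i hi => by rw [if_neg (by rintro rfl; exact hne hi)])]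
    have h1 : (∑ i ∈ s, c i * Int.gcdB (f a) (s.gcd f) * f i)
        = Int.gcdB (f a) (s.gcd f) * ∑ i ∈ s, c i * f i := by
      rw [Finset.mul_sum]; exact Finset.sum_congr rfl fun i _ => by ring
    rw [h1, hc, ← Int.coe_gcd, Int.gcd_eq_gcd_ab (f a) (s.gcd f)]
    simp only [if_true]
    ring


/-- there exist positive integers `α_i` such that, with
`Π = ∏ n_i ^ α_i`, `d` divides `Π - 1` and `gcd((Π-1)/d, d) = 1`, where
`d = gcd(n_i - 1)`. -/
theorem stmt9 (p : ℕ) (hp : 1 ≤ p) (n : Fin p → ℕ) (hn : ∀ i, 2 ≤ n i) :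
    ∃ α : Fin p → ℕ, (∀ i, 1 ≤ α i) ∧
      (Finset.gcd Finset.univ fun i => n i - 1) ∣ (∏ i, n i ^ α i) - 1 ∧
      Nat.gcd (((∏ i, n i ^ α i) - 1) / Finset.gcd Finset.univ (fun i => n i - 1))
        (Finset.gcd Finset.univ fun i => n i - 1) = 1 := by
  set d : ℕ := Finset.gcd Finset.univ (fun i => n i - 1) with hdd
  have i0 : Fin p := ⟨0, hp⟩
  have hdpos : 0 < d := by
    rcases Nat.eq_zero_or_pos d with h | h
    · exfalso
      rw [hdd] at h
      have h0 := Finset.gcd_eq_zero_iff.mp h i0 (Finset.mem_univ _)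
      have := hn i0; omega
    · exact h
  rcases eq_or_lt_of_le (show 1 ≤ d from hdpos) with hd1 | hd2
  · -- d = 1
    refine ⟨fun _ => 1, fun _ => le_refl 1, ?_, ?_⟩
    · rw [← hd1]; exact one_dvd _
    · rw [← hd1]; exact Nat.gcd_one_right _
  · -- 2 ≤ d
    have hdvd : ∀ i, d ∣ n i - 1 := fun i => Finset.gcd_dvd (Finset.mem_univ i)
    set m : Fin p → ℕ := fun i => (n i - 1) / d with hmdef
    have hm : ∀ i, n i - 1 = d * m i := fun i => (Nat.mul_div_cancel' (hdvd i)).symm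
    have hni : ∀ i, n i = d * m i + 1 := by intro i; have := hn i; have := hm i; omega
    -- gcd of m is 1
    have hgm : Finset.gcd Finset.univ m = 1 := by
      have h1 : Finset.gcd Finset.univ (fun i => d * m i) = d * Finset.gcd Finset.univ m := by
        rw [Finset.gcd_mul_left]; simp
      have h2 : (fun i => d * m i) = fun i => n i - 1 := funext fun i => (hm i).symm
      rw [h2, ← hdd] at h1
      have h3 : d * Finset.gcd Finset.univ m = d * 1 := by rw [mul_one, ← h1]
      exact Nat.eq_of_mul_eq_mul_left hdpos h3
    obtain ⟨c, hc⟩ := aux_bezout Finset.univ (fun i => (m i : ℤ))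
    set G : ℤ := (Finset.gcd Finset.univ (fun i => (m i : ℤ))) with hGdef
    have hGunit : G = 1 ∨ G = -1 := by
      have hdvdG : G.natAbs ∣ 1 := by
        rw [← hgm]
        apply Finset.dvd_gcd
        intro i _
        have : G ∣ (m i : ℤ) := Finset.gcd_dvd (Finset.mem_univ i)
        have := Int.natAbs_dvd_natAbs.mpr this
        simpa using this
      have := Nat.dvd_one.mp hdvdG
      rcases Int.natAbs_eq G with h | h <;> rw [this] at h <;> simp at h <;> omega
    -- define α
    set α : Fin p → ℕ := fun i => (c i % (d : ℤ) + d).toNat with hαdef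
    have hαpos : ∀ i, 1 ≤ α i := by
      intro i
      have h1 : 0 ≤ c i % (d : ℤ) := Int.emod_nonneg _ (by exact_mod_cast hdpos.ne')
      simp only [hαdef]
      omega
    have hαZ : ∀ i, (α i : ℤ) = c i % (d : ℤ) + d := by
      intro i
      have h1 : 0 ≤ c i % (d : ℤ) := Int.emod_nonneg _ (by exact_mod_cast hdpos.ne')
      simp only [hαdef]
      omega
    have hαmod : ∀ i, (d : ℤ) ∣ (α i : ℤ) - c i := by
      intro i
      rw [hαZ i]
      have := Int.emod_emod_of_dvd (c i) (dvd_refl (d : ℤ))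
      have h2 : c i % (d : ℤ) - c i = -((d:ℤ) * (c i / d)) := by
        rw [Int.emod_def]; ring
      calc (d:ℤ) ∣ (c i % (d:ℤ) - c i) + d := by
            rw [h2]; exact dvd_add (dvd_neg.mpr (Dvd.intro _ rfl)) (dvd_refl _)
        _ = c i % (d:ℤ) + d - c i := by ring
    refine ⟨α, hαpos, ?_⟩
    set P : ℕ := ∏ i, n i ^ α i with hPdef
    have hP1 : 1 ≤ P := Finset.one_le_prod' (fun i _ => Nat.one_le_pow _ _ (by have := hn i; omega))
    set S : ℕ := ∑ i, α i * m i with hSdef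
    -- key: in ZMod (d^2), P = 1 + d * S
    have hdd2 : ((d : ZMod (d^2)) * d = 0) := by
      have h := ZMod.natCast_self (d^2)
      push_cast at h
      linear_combination h
    have hprod : ((P : ℕ) : ZMod (d^2)) = 1 + (d : ZMod (d^2)) * (S : ℕ) := by
      rw [hPdef]
      push_cast
      have hstep : ∀ i : Fin p, ((n i : ZMod (d^2))) ^ α i
          = 1 + (d : ZMod (d^2)) * ((α i : ZMod (d^2)) * m i) := by
        intro i
        have hcast : ((n i : ZMod (d^2))) = 1 + (d : ZMod (d^2)) * m i := by
          rw [hni i]; push_cast; ring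
        have he : ((d : ZMod (d^2)) * m i) * ((d : ZMod (d^2)) * m i) = 0 := by
          linear_combination ((m i : ZMod (d^2)) * m i) * hdd2
        rw [hcast, aux_pow_one_add _ he]
        ring
      rw [Finset.prod_congr rfl (fun i _ => hstep i),
        aux_prod_one_add Finset.univ _ hdd2 (fun i => (α i : ZMod (d^2)) * (m i : ZMod (d^2)))]
      rw [hSdef]
      push_cast
      ring
    -- to Int modular arithmetic
    have hmod2 : ((d : ℤ))^2 ∣ (P : ℤ) - (1 + d * S) := by
      have : ((P : ℤ) : ZMod (d^2)) = (((1 + d * S : ℤ)) : ZMod (d^2)) := by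
        push_cast [hprod]
        ring
      have h2 := (ZMod.intCast_eq_intCast_iff _ _ _).mp this
      have h3 : ((d^2:ℕ):ℤ) ∣ (P:ℤ) - (1 + d*S) := Int.ModEq.dvd h2.symm
      exact_mod_cast h3
    -- d divides P - 1
    have hdvdP : d ∣ P - 1 := by
      have h1 : (d : ℤ) ∣ (P : ℤ) - 1 := by
        have h2 : (d : ℤ) ∣ (P : ℤ) - (1 + d * S) := dvd_trans (by rw [sq]; exact Dvd.intro _ rfl) hmod2
        have : (P : ℤ) - 1 = ((P : ℤ) - (1 + d * S)) + d * S := by ring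
        rw [this]
        exact dvd_add h2 (Dvd.intro _ rfl)
      have h2 : ((P - 1 : ℕ) : ℤ) = (P : ℤ) - 1 := by push_cast [Nat.cast_sub hP1]; ring
      rw [← Int.natCast_dvd_natCast, h2]
      exact h1
    refine ⟨hdvdP, ?_⟩
    set Q : ℕ := (P - 1) / d with hQdef
    have hQ : (P : ℤ) - 1 = d * Q := by
      have h1 : d * Q = P - 1 := Nat.mul_div_cancel' hdvdP
      have h2 : ((P - 1 : ℕ) : ℤ) = (P : ℤ) - 1 := by push_cast [Nat.cast_sub hP1]; ring
      rw [← h2, ← h1]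
      push_cast
      ring
    -- Q ≡ S mod d
    have hQS : (d : ℤ) ∣ (Q : ℤ) - S := by
      obtain ⟨t, ht⟩ := hmod2
      have hdne : (d : ℤ) ≠ 0 := by exact_mod_cast hdpos.ne'
      have h1 : (d:ℤ) * ((Q : ℤ) - S) = (d:ℤ) * ((d:ℤ) * t) := by
        rw [mul_sub, ← hQ]
        linear_combination ht + (by rw [sq] : ((d:ℤ))^2 = d * d) * t
      have := mul_left_cancel₀ hdne h1
      exact ⟨t, this⟩
    -- S ≡ G mod d
    have hSG : (d : ℤ) ∣ (S : ℤ) - G := by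
      rw [← hc, hSdef]
      push_cast
      rw [← Finset.sum_sub_distrib]
      apply Finset.dvd_sum
      intro i _
      have : (α i : ℤ) * m i - c i * m i = ((α i : ℤ) - c i) * m i := by ring
      rw [this]
      exact Dvd.dvd.mul_right (hαmod i) _
    -- conclude coprimality
    have hQG : (d : ℤ) ∣ (Q : ℤ) - G := by
      have : (Q : ℤ) - G = ((Q : ℤ) - S) + ((S : ℤ) - G) := by ring
      rw [this]; exact dvd_add hQS hSG
    obtain ⟨u, hu⟩ := hQG
    have hQeq : (Q : ℤ) = G + d * u := by linarith [hu]
    have hcop : IsCoprime (Q : ℤ) (d : ℤ) := by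
      rw [hQeq]
      have hGd : IsCoprime G (d : ℤ) := by
        rcases hGunit with h | h <;> rw [h]
        · exact isCoprime_one_left
        · exact isCoprime_one_left.neg_left
      exact hGd.add_mul_left_left u
    have := Int.isCoprime_iff_gcd_eq_one.mp hcop
    rwa [Int.gcd_natCast_natCast] at this
end

section
/- Let r > 0 and let λ_1 > 1 > λ_2 > 0 be real numbers. Set a = r(1 − λ_2)/(λ_1 − λ_2) ∈ (0, r), and let f ∈ PL⁺(S_r) be the PL homeomorphism whose lift f̃ satisfies f̃(x) = λ_1 x + λ_2 (r − a) for x ∈ [0, a] and f̃(x) = λ_2 (x − a) + r for x ∈ [a, r] (so f has exactly the two break points 0 and a, with f(a) = 0). Then the rotation number of f is ρ(f) = log λ_1 / (log λ_1 − log λ_2) (mod 1). -/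
open Filter Topology Set

set_option maxHeartbeats 1000000 in
/-- the Boshernitzan example on `S_r` with slopes `λ₁ > 1 > λ₂ > 0` and
break points `0` and `a = r(1-λ₂)/(λ₁-λ₂)` has rotation number
`log λ₁ / (log λ₁ - log λ₂) (mod 1)`. -/
theorem stmt10 (r lam1 lam2 : ℝ) (hr : 0 < r)
    (h1 : 1 < lam1) (h2 : 0 < lam2) (h3 : lam2 < 1)
    (a : ℝ) (ha : a = r * (1 - lam2) / (lam1 - lam2))
    (f : ℝ → ℝ) (hPL : IsPLplus r f)
    (hper : ∀ x, f (x + r) = f x + r)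
    (hf1 : ∀ x ∈ Set.Icc (0 : ℝ) a, f x = lam1 * x + lam2 * (r - a))
    (hf2 : ∀ x ∈ Set.Icc a r, f x = lam2 * (x - a) + r) :
    ∃ ρ : ℝ, HasRotNum r f ρ ∧
      ∃ k : ℤ, ρ = Real.log lam1 / (Real.log lam1 - Real.log lam2) + (k : ℝ) := by
  have hlt : lam2 < lam1 := lt_trans h3 h1
  have hd : 0 < lam1 - lam2 := by linarith
  have hl1 : 0 < Real.log lam1 := Real.log_pos h1
  have hl2 : Real.log lam2 < 0 := Real.log_neg h2 h3
  have hL0 : 0 < Real.log lam1 - Real.log lam2 := by linarith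
  set L : ℝ := Real.log lam1 - Real.log lam2 with hLdef
  have hL : 0 < L := hL0
  set ρ : ℝ := Real.log lam1 / L with hrhodef
  have hapos : 0 < a := by
    rw [ha]; exact div_pos (mul_pos hr (by linarith)) hd
  have halt : a < r := by
    rw [ha, div_lt_iff₀ hd]; nlinarith
  have hkey : lam1 * a + lam2 * (r - a) = r := by
    rw [ha]; field_simp; ring
  set u : ℝ → ℝ := fun x => (lam1 - lam2) * x / r + lam2 with hu
  set H : ℝ → ℝ := fun x => ((⌊x / r⌋ : ℤ) : ℝ) +
      (Real.log (u (x - ((⌊x / r⌋ : ℤ) : ℝ) * r)) - Real.log lam2) / L with hH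
  have hupos : ∀ x : ℝ, 0 ≤ x → 0 < u x := by
    intro x hx
    simp only [hu]
    have h0 : 0 ≤ (lam1 - lam2) * x / r := by positivity
    linarith
  have hHval : ∀ (x : ℝ) (m : ℤ), (m : ℝ) * r ≤ x → x < ((m : ℝ) + 1) * r →
      H x = (m : ℝ) + (Real.log (u (x - (m : ℝ) * r)) - Real.log lam2) / L := by
    intro x m hm1 hm2
    have hfl : ⌊x / r⌋ = m := by
      rw [Int.floor_eq_iff]
      constructor
      · rw [le_div_iff₀ hr]; exact hm1
      · rw [div_lt_iff₀ hr]; exact_mod_cast hm2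
    simp only [hH, hfl]
  have hstep1 : ∀ x : ℝ, 0 ≤ x → x < a → H (f x) = H x + ρ := by
    intro x hx0 hxa
    have hfx : f x = lam1 * x + lam2 * (r - a) := hf1 x ⟨hx0, hxa.le⟩
    have hfx0 : ((0 : ℤ) : ℝ) * r ≤ f x := by rw [hfx]; push_cast; nlinarith
    have hfxr : f x < (((0 : ℤ) : ℝ) + 1) * r := by rw [hfx]; push_cast; nlinarith
    have hx0' : ((0 : ℤ) : ℝ) * r ≤ x := by push_cast; linarith
    have hxr' : x < (((0 : ℤ) : ℝ) + 1) * r := by push_cast; linarith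
    rw [hHval (f x) 0 hfx0 hfxr, hHval x 0 hx0' hxr']
    have halg : u (f x - ((0 : ℤ) : ℝ) * r) = lam1 * u (x - ((0 : ℤ) : ℝ) * r) := by
      simp only [hu, hfx, ha]
      push_cast
      field_simp
      ring
    rw [halg, Real.log_mul (by positivity) (hupos _ (by push_cast; linarith)).ne']
    rw [hrhodef]
    push_cast
    ring
  have hstep2 : ∀ x : ℝ, a ≤ x → x < r → H (f x) = H x + ρ := by
    intro x hxa hxr
    have hfx : f x = lam2 * (x - a) + r := hf2 x ⟨hxa, hxr.le⟩
    have hfx0 : ((1 : ℤ) : ℝ) * r ≤ f x := by rw [hfx]; push_cast; nlinarith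
    have hfxr : f x < (((1 : ℤ) : ℝ) + 1) * r := by rw [hfx]; push_cast; nlinarith
    have hx0' : ((0 : ℤ) : ℝ) * r ≤ x := by push_cast; linarith
    have hxr' : x < (((0 : ℤ) : ℝ) + 1) * r := by push_cast; linarith
    rw [hHval (f x) 1 hfx0 hfxr, hHval x 0 hx0' hxr']
    have halg : u (f x - ((1 : ℤ) : ℝ) * r) = lam2 * u (x - ((0 : ℤ) : ℝ) * r) := by
      simp only [hu, hfx, ha]
      push_cast
      field_simp
      ring
    rw [halg, Real.log_mul h2.ne' (hupos _ (by push_cast; linarith)).ne']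
    rw [hrhodef, hLdef]
    push_cast
    field_simp [(ne_of_gt (by linarith) : Real.log lam1 - Real.log lam2 ≠ 0)]
    ring
  have hfZ : ∀ (m : ℤ) (x : ℝ), f (x + (m : ℝ) * r) = f x + (m : ℝ) * r := by
    intro m
    induction m using Int.induction_on with
    | zero => intro x; simp
    | succ k ih =>
      intro x
      have e1 : x + (((k : ℤ) + 1 : ℤ) : ℝ) * r = (x + ((k : ℤ) : ℝ) * r) + r := by
        push_cast; ring
      rw [e1, hper, ih]
      push_cast; ring
    | pred k ih =>
      intro x
      have e1 : x + ((-(k : ℤ) : ℤ) : ℝ) * r = (x + ((-(k : ℤ) - 1 : ℤ) : ℝ) * r) + r := by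
        push_cast; ring
      have h2' := hper (x + ((-(k : ℤ) - 1 : ℤ) : ℝ) * r)
      rw [← e1, ih] at h2'
      have : f (x + ((-(k : ℤ) - 1 : ℤ) : ℝ) * r) = f x + ((-(k : ℤ) : ℝ)) * r - r := by
        push_cast at h2' ⊢; linarith
      rw [this]
      push_cast; ring
  have hHZ : ∀ (m : ℤ) (x : ℝ), H (x + (m : ℝ) * r) = H x + (m : ℝ) := by
    intro m x
    have h1' : (x + (m : ℝ) * r) / r = x / r + (m : ℝ) := by field_simp
    simp only [hH, h1', Int.floor_add_intCast]
    have h2' : x + (m : ℝ) * r - ((⌊x / r⌋ + m : ℤ) : ℝ) * r = x - ((⌊x / r⌋ : ℤ) : ℝ) * r := by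
      push_cast; ring
    rw [h2']
    push_cast; ring
  have hfloor_bounds : ∀ x : ℝ, 0 ≤ x - ((⌊x / r⌋ : ℤ) : ℝ) * r ∧ x - ((⌊x / r⌋ : ℤ) : ℝ) * r < r := by
    intro x
    have h1' := Int.floor_le (x / r)
    have h2' := Int.lt_floor_add_one (x / r)
    constructor
    · have := (le_div_iff₀ hr).1 h1'
      linarith
    · have := (div_lt_iff₀ hr).1 h2'
      nlinarith
  have hstep : ∀ x : ℝ, H (f x) = H x + ρ := by
    intro x
    obtain ⟨hy0, hyr⟩ := hfloor_bounds x
    set m : ℤ := ⌊x / r⌋ with hm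
    set y : ℝ := x - (m : ℝ) * r with hy
    have hxy : x = y + (m : ℝ) * r := by rw [hy]; ring
    have hfy : H (f y) = H y + ρ := by
      rcases lt_or_ge y a with hc | hc
      · exact hstep1 y hy0 hc
      · exact hstep2 y hc hyr
    calc H (f x) = H (f (y + (m : ℝ) * r)) := by rw [← hxy]
      _ = H (f y + (m : ℝ) * r) := by rw [hfZ]
      _ = H (f y) + (m : ℝ) := hHZ m (f y)
      _ = H y + ρ + (m : ℝ) := by rw [hfy]
      _ = (H y + (m : ℝ)) + ρ := by ring
      _ = H (y + (m : ℝ) * r) + ρ := by rw [hHZ]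
      _ = H x + ρ := by rw [← hxy]
  have hH0 : H 0 = 0 := by
    have : H 0 = ((0 : ℤ) : ℝ) + (Real.log (u (0 - ((0 : ℤ) : ℝ) * r)) - Real.log lam2) / L :=
      hHval 0 0 (by push_cast; nlinarith) (by push_cast; nlinarith)
    rw [this]
    have hu0 : u (0 - ((0 : ℤ) : ℝ) * r) = lam2 := by simp [hu]
    rw [hu0]
    push_cast; ring
  have hiter : ∀ n : ℕ, H (f^[n] 0) = (n : ℝ) * ρ := by
    intro n
    induction n with
    | zero => simpa using hH0
    | succ k ih =>
      rw [Function.iterate_succ_apply', hstep, ih]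
      push_cast; ring
  have hbound : ∀ x : ℝ, |x / r - H x| < 1 := by
    intro x
    obtain ⟨hy0, hyr⟩ := hfloor_bounds x
    set m : ℤ := ⌊x / r⌋ with hm
    have hHx : H x = (m : ℝ) + (Real.log (u (x - (m : ℝ) * r)) - Real.log lam2) / L := by
      apply hHval x m
      · linarith
      · nlinarith
    have hu1 : lam2 ≤ u (x - (m : ℝ) * r) := by
      simp only [hu]
      have : 0 ≤ (lam1 - lam2) * (x - (m : ℝ) * r) / r := by positivity
      linarith
    have hu2 : u (x - (m : ℝ) * r) < lam1 := by
      simp only [hu]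
      have : (lam1 - lam2) * (x - (m : ℝ) * r) / r < lam1 - lam2 := by
        rw [div_lt_iff₀ hr]; nlinarith
      linarith
    have hlog1 : Real.log lam2 ≤ Real.log (u (x - (m : ℝ) * r)) :=
      Real.log_le_log h2 hu1
    have hlog2 : Real.log (u (x - (m : ℝ) * r)) < Real.log lam1 :=
      Real.log_lt_log (by linarith) hu2
    have hφ0 : 0 ≤ (Real.log (u (x - (m : ℝ) * r)) - Real.log lam2) / L :=
      div_nonneg (by linarith) hL.le
    have hφ1 : (Real.log (u (x - (m : ℝ) * r)) - Real.log lam2) / L < 1 := by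
      rw [div_lt_one hL, hLdef]; linarith
    have hxr1 : (m : ℝ) ≤ x / r := by rw [le_div_iff₀ hr]; linarith
    have hxr2 : x / r < (m : ℝ) + 1 := by rw [div_lt_iff₀ hr]; linarith
    rw [hHx, abs_lt]
    constructor <;> linarith
  refine ⟨ρ, ?_, 0, by rw [hrhodef]; push_cast; ring⟩
  show Filter.Tendsto (fun nn : ℕ => f^[nn] 0 / (r * nn)) Filter.atTop (nhds ρ)
  have hten : Filter.Tendsto (fun n : ℕ => f^[n] 0 / (r * n) - ρ) Filter.atTop (nhds 0) := by
    apply squeeze_zero_norm' ?_ tendsto_one_div_atTop_nhds_zero_nat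
    filter_upwards [Filter.eventually_ge_atTop 1] with n hn
    have hn0 : (0 : ℝ) < (n : ℝ) := by exact_mod_cast hn
    have hb := hbound (f^[n] 0)
    rw [hiter n] at hb
    have heq : f^[n] 0 / (r * n) - ρ = (f^[n] 0 / r - (n : ℝ) * ρ) / (n : ℝ) := by
      field_simp
    rw [Real.norm_eq_abs, heq, abs_div, abs_of_pos hn0]
    gcongr
  have := hten.add (tendsto_const_nhds (x := ρ))
  simpa using this
end

section
/- Let f, g ∈ PL⁺(S_r) be commuting elements that generate a free abelian group of rank 2 acting freely on S_r. Then f has the (D)-property: for every break point a of f, the orbit { fⁿ(a) : n ∈ ℤ } contains only finitely many break points of f and the product ∏_{n∈ℤ} σ_f(fⁿ(a)) (all but finitely many factors of which equal 1) is equal to 1. -/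
open Filter Topology Set

lemma affine_hasDerivAt (lam c x : ℝ) : HasDerivAt (fun y => lam * y + c) lam x := by
  simpa using ((hasDerivAt_id x).const_mul lam).add_const c

lemma hasDerivWithinAt_Ici_of_affine {f : ℝ → ℝ} {lam c u v x : ℝ}
    (hux : u ≤ x) (hxv : x < v) (h : ∀ y ∈ Icc u v, f y = lam * y + c) :
    HasDerivWithinAt f lam (Ici x) x := by
  have hmem : Ico x v ∈ nhdsWithin x (Ici x) := by
    rw [← Ici_inter_Iio]
    exact inter_mem_nhdsWithin _ (Iio_mem_nhds hxv)
  refine ((affine_hasDerivAt lam c x).hasDerivWithinAt).congr_of_eventuallyEq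
    (Filter.eventuallyEq_of_mem hmem fun y hy => h y ⟨hux.trans hy.1, hy.2.le⟩)
    (h x ⟨hux, hxv.le⟩)

lemma hasDerivWithinAt_Iic_of_affine {f : ℝ → ℝ} {lam c u v x : ℝ}
    (hux : u < x) (hxv : x ≤ v) (h : ∀ y ∈ Icc u v, f y = lam * y + c) :
    HasDerivWithinAt f lam (Iic x) x := by
  have hmem : Ioc u x ∈ nhdsWithin x (Iic x) := by
    rw [← Iic_inter_Ioi]
    exact inter_mem_nhdsWithin _ (Ioi_mem_nhds hux)
  refine ((affine_hasDerivAt lam c x).hasDerivWithinAt).congr_of_eventuallyEq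
    (Filter.eventuallyEq_of_mem hmem fun y hy => h y ⟨hy.1.le, hy.2.trans hxv⟩)
    (h x ⟨hux.le, hxv⟩)

lemma pl_per {r : ℝ} {f : ℝ → ℝ} (hper : ∀ x, f (x + r) = f x + r) :
    ∀ (x : ℝ) (n : ℤ), f (x + n * r) = f x + n * r := by
  intro x n
  induction n using Int.induction_on with
  | zero => simp
  | succ n ih =>
      have h := hper (x + n * r)
      push_cast
      push_cast at ih
      rw [show x + (n + 1) * r = x + n * r + r by ring, h, ih]; ring
  | pred n ih =>
      have h := hper (x + (-(n:ℝ) - 1) * r)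
      push_cast
      push_cast at ih
      rw [show x + (-(n:ℝ) - 1) * r + r = x + -(n:ℝ) * r by ring, ih] at h
      linarith

-- index finding
lemma find_right {k : ℕ} {a : ℕ → ℝ} {r t : ℝ} (hk : 1 ≤ k) (ha0 : a 0 = 0) (hak : a k = r)
    (ht0 : 0 ≤ t) (htr : t < r) : ∃ i < k, a i ≤ t ∧ t < a (i + 1) := by
  classical
  set s := (Finset.range k).filter (fun i => a i ≤ t) with hs
  have h0 : 0 ∈ s := by
    simp only [hs, Finset.mem_filter, Finset.mem_range, ha0]
    exact ⟨by omega, by linarith⟩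
  have hne : s.Nonempty := ⟨0, h0⟩
  set i := s.max' hne with hi
  have his : i ∈ s := s.max'_mem hne
  have hik : i < k := (Finset.mem_filter.mp his).1 |> Finset.mem_range.mp
  have hait : a i ≤ t := (Finset.mem_filter.mp his).2
  refine ⟨i, hik, hait, ?_⟩
  by_cases h : i + 1 = k
  · rw [h, hak]; exact htr
  · by_contra hcon
    push_neg at hcon
    have : i + 1 ∈ s := Finset.mem_filter.mpr ⟨Finset.mem_range.mpr (lt_of_le_of_ne hik h), hcon⟩
    have := s.le_max' _ this
    omega

lemma find_left {k : ℕ} {a : ℕ → ℝ} {r t : ℝ} (hk : 1 ≤ k) (ha0 : a 0 = 0) (hak : a k = r)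
    (ht0 : 0 < t) (htr : t ≤ r) : ∃ i < k, a i < t ∧ t ≤ a (i + 1) := by
  classical
  set s := (Finset.range k).filter (fun i => a i < t) with hs
  have h0 : 0 ∈ s := by
    simp only [hs, Finset.mem_filter, Finset.mem_range, ha0]
    exact ⟨by omega, by linarith⟩
  have hne : s.Nonempty := ⟨0, h0⟩
  set i := s.max' hne with hi
  have his : i ∈ s := s.max'_mem hne
  have hik : i < k := (Finset.mem_filter.mp his).1 |> Finset.mem_range.mp
  have hait : a i < t := (Finset.mem_filter.mp his).2
  refine ⟨i, hik, hait, ?_⟩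
  by_cases h : i + 1 = k
  · rw [h, hak]; exact htr
  · by_contra hcon
    push_neg at hcon
    have : i + 1 ∈ s := Finset.mem_filter.mpr ⟨Finset.mem_range.mpr (lt_of_le_of_ne hik h), hcon⟩
    have := s.le_max' _ this
    omega

-- reduce mod r
lemma red_right {r x : ℝ} (hr : 0 < r) : ∃ n : ℤ, 0 ≤ x - n * r ∧ x - n * r < r := by
  have hx : x / r * r = x := div_mul_cancel₀ x hr.ne'
  refine ⟨⌊x / r⌋, ?_, ?_⟩
  · have h := Int.floor_le (x / r)
    nlinarith [mul_le_mul_of_nonneg_right h hr.le]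
  · have h := Int.lt_floor_add_one (x / r)
    nlinarith [mul_le_mul_of_nonneg_right h.le hr.le]

lemma red_left {r x : ℝ} (hr : 0 < r) : ∃ n : ℤ, 0 < x - n * r ∧ x - n * r ≤ r := by
  have hx : x / r * r = x := div_mul_cancel₀ x hr.ne'
  refine ⟨⌈x / r⌉ - 1, ?_, ?_⟩
  · have h := Int.ceil_lt_add_one (x / r)
    push_cast
    nlinarith [mul_le_mul_of_nonneg_right h.le hr.le]
  · have h := Int.le_ceil (x / r)
    push_cast
    nlinarith [mul_le_mul_of_nonneg_right h hr.le]

/-- Master structural lemma for PL⁺ maps. -/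
lemma pl_structure {r : ℝ} {f : ℝ → ℝ} (hr : 0 < r) (hf : IsPLplus r f) :
    ∃ N : Set ℝ, N.Finite ∧
      (∀ x, IsBreak f x → ∃ z ∈ N, ∃ n : ℤ, x = z + n * r) ∧
      (∀ x, 0 < rDeriv f x ∧ 0 < lDeriv f x ∧
        HasDerivWithinAt f (rDeriv f x) (Ici x) x ∧
        HasDerivWithinAt f (lDeriv f x) (Iic x) x) := by
  obtain ⟨hmono, hcont, hper, k, a, hk, ha0, hak, hlt, haff⟩ := hf
  have hperz := pl_per hper
  -- affine on shifted pieces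
  have haffz : ∀ i, i < k → ∀ n : ℤ, ∃ lam c : ℝ, 0 < lam ∧
      ∀ y ∈ Icc (a i + n * r) (a (i + 1) + n * r), f y = lam * y + c := by
    intro i hi n
    obtain ⟨lam, c, hlam, hfc⟩ := haff i hi
    refine ⟨lam, c + n * r - lam * (n * r), hlam, fun y hy => ?_⟩
    have h1 : f (y - n * r + n * r) = f (y - n * r) + n * r := hperz _ n
    have h2 : f (y - n * r) = lam * (y - n * r) + c :=
      hfc _ ⟨by linarith [hy.1], by linarith [hy.2]⟩
    have h3 : y - n * r + n * r = y := by ring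
    rw [h3] at h1
    rw [h1, h2]; ring
  -- right piece at any point
  have pieceR : ∀ x : ℝ, ∃ i < k, ∃ n : ℤ, ∃ lam c : ℝ, 0 < lam ∧
      a i + n * r ≤ x ∧ x < a (i + 1) + n * r ∧
      ∀ y ∈ Icc (a i + n * r) (a (i + 1) + n * r), f y = lam * y + c := by
    intro x
    obtain ⟨n, h0, h1⟩ := red_right (x := x) hr
    obtain ⟨i, hik, hit, hit'⟩ := find_right hk ha0 hak h0 h1
    obtain ⟨lam, c, hlam, hfc⟩ := haffz i hik n
    exact ⟨i, hik, n, lam, c, hlam, by linarith, by linarith, hfc⟩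
  have pieceL : ∀ x : ℝ, ∃ i < k, ∃ n : ℤ, ∃ lam c : ℝ, 0 < lam ∧
      a i + n * r < x ∧ x ≤ a (i + 1) + n * r ∧
      ∀ y ∈ Icc (a i + n * r) (a (i + 1) + n * r), f y = lam * y + c := by
    intro x
    obtain ⟨n, h0, h1⟩ := red_left (x := x) hr
    obtain ⟨i, hik, hit, hit'⟩ := find_left hk ha0 hak h0 h1
    obtain ⟨lam, c, hlam, hfc⟩ := haffz i hik n
    exact ⟨i, hik, n, lam, c, hlam, by linarith, by linarith, hfc⟩
  refine ⟨a '' (Iic k), (finite_Iic k).image a, ?_, ?_⟩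
  · -- breaks are at nodes
    intro x hx
    obtain ⟨i, hik, n, lam, c, hlam, hux, hxv, hfc⟩ := pieceR x
    by_contra hcon
    push_neg at hcon
    have hne : a i + n * r ≠ x := fun h =>
      hcon (a i) ⟨i, hik.le, rfl⟩ n h.symm
    have hux' : a i + n * r < x := lt_of_le_of_ne hux hne
    have hR : HasDerivWithinAt f lam (Ici x) x :=
      hasDerivWithinAt_Ici_of_affine hux hxv hfc
    have hL : HasDerivWithinAt f lam (Iic x) x :=
      hasDerivWithinAt_Iic_of_affine hux' hxv.le hfc
    exact hx (by
      show rDeriv f x = lDeriv f x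
      rw [rDeriv, lDeriv, hR.derivWithin (uniqueDiffOn_Ici x x Set.self_mem_Ici),
        hL.derivWithin (uniqueDiffOn_Iic x x Set.self_mem_Iic)])
  · intro x
    obtain ⟨i, hik, n, lam, c, hlam, hux, hxv, hfc⟩ := pieceR x
    obtain ⟨i', hik', n', lam', c', hlam', hux', hxv', hfc'⟩ := pieceL x
    have hR : HasDerivWithinAt f lam (Ici x) x :=
      hasDerivWithinAt_Ici_of_affine hux hxv hfc
    have hL : HasDerivWithinAt f lam' (Iic x) x :=
      hasDerivWithinAt_Iic_of_affine hux' hxv' hfc'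
    have hRe : rDeriv f x = lam := hR.derivWithin (uniqueDiffOn_Ici x x Set.self_mem_Ici)
    have hLe : lDeriv f x = lam' := hL.derivWithin (uniqueDiffOn_Iic x x Set.self_mem_Iic)
    rw [hRe, hLe]
    exact ⟨hlam, hlam', hRe ▸ hR, hLe ▸ hL⟩

/-- The conjugation identity for jumps of commuting PL maps. -/
lemma jump_comm {r : ℝ} {f g : ℝ → ℝ} (hr : 0 < r) (hf : IsPLplus r f) (hg : IsPLplus r g)
    (hc : ∀ x, f (g x) = g (f x)) (x : ℝ) :
    jumpRatio f (g x) * jumpRatio g x = jumpRatio f x * jumpRatio g (f x) := by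
  obtain ⟨Nf, _, _, hDf⟩ := pl_structure hr hf
  obtain ⟨Ng, _, _, hDg⟩ := pl_structure hr hg
  have hfm : Monotone f := hf.1.monotone
  have hgm : Monotone g := hg.1.monotone
  have hmapsg : MapsTo g (Ici x) (Ici (g x)) := fun y hy => hgm hy
  have hmapsf : MapsTo f (Ici x) (Ici (f x)) := fun y hy => hfm hy
  have hmapsg' : MapsTo g (Iic x) (Iic (g x)) := fun y hy => hgm hy
  have hmapsf' : MapsTo f (Iic x) (Iic (f x)) := fun y hy => hfm hy
  have h1 : HasDerivWithinAt (f ∘ g) (rDeriv f (g x) * rDeriv g x) (Ici x) x :=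
    (hDf (g x)).2.2.1.comp x (hDg x).2.2.1 hmapsg
  have h2 : HasDerivWithinAt (g ∘ f) (rDeriv g (f x) * rDeriv f x) (Ici x) x :=
    (hDg (f x)).2.2.1.comp x (hDf x).2.2.1 hmapsf
  have h1' : HasDerivWithinAt (f ∘ g) (lDeriv f (g x) * lDeriv g x) (Iic x) x :=
    (hDf (g x)).2.2.2.comp x (hDg x).2.2.2 hmapsg'
  have h2' : HasDerivWithinAt (g ∘ f) (lDeriv g (f x) * lDeriv f x) (Iic x) x :=
    (hDg (f x)).2.2.2.comp x (hDf x).2.2.2 hmapsf'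
  have hfg : f ∘ g = g ∘ f := funext hc
  rw [hfg] at h1 h1'
  have eR : rDeriv f (g x) * rDeriv g x = rDeriv g (f x) * rDeriv f x := by
    rw [← h1.derivWithin (uniqueDiffOn_Ici x x Set.self_mem_Ici),
      ← h2.derivWithin (uniqueDiffOn_Ici x x Set.self_mem_Ici)]
  have eL : lDeriv f (g x) * lDeriv g x = lDeriv g (f x) * lDeriv f x := by
    rw [← h1'.derivWithin (uniqueDiffOn_Iic x x Set.self_mem_Iic),
      ← h2'.derivWithin (uniqueDiffOn_Iic x x Set.self_mem_Iic)]
  rw [jumpRatio, jumpRatio, jumpRatio, jumpRatio, div_mul_div_comm, div_mul_div_comm,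
    eR, eL, mul_comm (rDeriv g (f x)) (rDeriv f x), mul_comm (lDeriv g (f x)) (lDeriv f x)]

lemma jump_pos {r : ℝ} {f : ℝ → ℝ} (hr : 0 < r) (hf : IsPLplus r f) (x : ℝ) :
    0 < jumpRatio f x := by
  obtain ⟨Nf, _, _, hDf⟩ := pl_structure hr hf
  exact div_pos (hDf x).1 (hDf x).2.1

lemma jump_eq_one {r : ℝ} {f : ℝ → ℝ} (hr : 0 < r) (hf : IsPLplus r f) {x : ℝ}
    (h : ¬ IsBreak f x) : jumpRatio f x = 1 := by
  obtain ⟨Nf, _, _, hDf⟩ := pl_structure hr hf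
  rw [IsBreak, not_not] at h
  rw [jumpRatio, h, div_self (hDf x).2.1.ne']

/-- Finiteness of breaks along a "free orbit". -/
lemma orbit_breaks_finite {ι : Type*} {r : ℝ} {F : ℝ → ℝ} (hr : 0 < r)
    (N : Set ℝ) (hN : N.Finite)
    (hbr : ∀ x, IsBreak F x → ∃ z ∈ N, ∃ n : ℤ, x = z + n * r)
    (φ : ι → ℝ) (hφ : ∀ m n (k : ℤ), φ m = φ n + k * r → m = n) :
    {i : ι | IsBreak F (φ i)}.Finite := by
  set red : ℝ → ℝ := fun y => y - (⌊y / r⌋ : ℝ) * r with hred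
  have hredz : ∀ (z : ℝ) (n : ℤ), red (z + n * r) = red z := by
    intro z n
    have h1 : (z + n * r) / r = z / r + n := by field_simp
    simp only [hred, h1, Int.floor_add_intCast]
    push_cast; ring
  have hinj : Function.Injective (red ∘ φ) := by
    intro m n h
    simp only [Function.comp, hred] at h
    exact hφ m n (⌊φ m / r⌋ - ⌊φ n / r⌋) (by push_cast; linarith)
  have hsub : {i : ι | IsBreak F (φ i)} ⊆ (red ∘ φ) ⁻¹' (red '' N) := by
    intro i hi
    obtain ⟨z, hz, n, hzn⟩ := hbr _ hi
    exact ⟨z, hz, by simp only [Function.comp, hzn, hredz]⟩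
  exact ((hN.image red).preimage hinj.injOn).subset hsub


set_option maxHeartbeats 1600000

/-- if `f, g ∈ PL⁺(S_r)` commute and generate a free abelian group of
rank 2 acting freely on `S_r`, then `f` has the (D)-property: along the orbit of any
break point `a` of `f` there are only finitely many break points and the product of
the jumps of `f` is `1`. -/
theorem stmt15 (r : ℝ) (hr : 0 < r) (f g : Equiv.Perm ℝ)
    (hf : IsPLplus r ⇑f) (hg : IsPLplus r ⇑g) (hcomm : Commute f g)
    (hfree : ∀ i j : ℤ, ¬(i = 0 ∧ j = 0) →
      ∀ (x : ℝ) (k : ℤ), (f ^ i * g ^ j) x ≠ x + (k : ℝ) * r)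
    (a : ℝ) (ha : IsBreak (⇑f) a) :
    {nn : ℤ | IsBreak (⇑f) ((f ^ nn) a)}.Finite ∧
      ∏ᶠ nn : ℤ, jumpRatio (⇑f) ((f ^ nn) a) = 1 := by
  classical
  obtain ⟨Nf, hNf_fin, hNf_br, hDf⟩ := pl_structure hr hf
  obtain ⟨Ng, hNg_fin, hNg_br, hDg⟩ := pl_structure hr hg
  -- commuting of powers, pointwise
  have hc : ∀ (i j : ℤ) (x : ℝ), (f ^ i) ((g ^ j) x) = (g ^ j) ((f ^ i) x) := by
    intro i j x
    rw [← Equiv.Perm.mul_apply, ← Equiv.Perm.mul_apply, (hcomm.zpow_zpow i j).eq]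
  -- free orbit of f
  have horb : ∀ (y : ℝ) (m n k : ℤ), (f ^ m) y = (f ^ n) y + k * r → m = n := by
    intro y m n k h
    by_contra hmn
    apply hfree (m - n) 0 (by simp [sub_eq_zero]; exact hmn) ((f ^ n) y) k
    have e1 : (f ^ (m - n) * g ^ (0 : ℤ)) ((f ^ n) y) = (f ^ m) y := by
      rw [zpow_zero, mul_one, ← Equiv.Perm.mul_apply, ← zpow_add,
        show m - n + n = m by ring]
    rw [e1, h]
  -- finiteness of breaks of f and of g along any f-orbit
  have hfin_f : ∀ y : ℝ, {n : ℤ | IsBreak (⇑f) ((f ^ n) y)}.Finite := fun y =>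
    orbit_breaks_finite hr Nf hNf_fin hNf_br (fun n => (f ^ n) y) (horb y)
  have hfin_g : ∀ y : ℝ, {n : ℤ | IsBreak (⇑g) ((f ^ n) y)}.Finite := fun y =>
    orbit_breaks_finite hr Ng hNg_fin hNg_br (fun n => (f ^ n) y) (horb y)
  refine ⟨hfin_f a, ?_⟩
  -- positivity etc.
  have hjf_pos : ∀ x, 0 < jumpRatio (⇑f) x := jump_pos hr hf
  have hjg_pos : ∀ x, 0 < jumpRatio (⇑g) x := jump_pos hr hg
  have hjf_one : ∀ x, ¬ IsBreak (⇑f) x → jumpRatio (⇑f) x = 1 := fun x => jump_eq_one hr hf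
  have hjg_one : ∀ x, ¬ IsBreak (⇑g) x → jumpRatio (⇑g) x = 1 := fun x => jump_eq_one hr hg
  have hpow : ∀ (n : ℤ) (y : ℝ), (f ^ (n + 1)) y = f ((f ^ n) y) := by
    intro n y
    rw [add_comm, zpow_one_add, Equiv.Perm.mul_apply]
  -- key step: D (g y) = D y
  have key : ∀ y : ℝ, (∏ᶠ n : ℤ, jumpRatio (⇑f) ((f ^ n) (g y)))
      = ∏ᶠ n : ℤ, jumpRatio (⇑f) ((f ^ n) y) := by
    intro y
    set u : ℤ → ℝ := fun n => jumpRatio (⇑f) ((f ^ n) y) with hu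
    set w : ℤ → ℝ := fun n => jumpRatio (⇑g) ((f ^ n) y) with hw
    have hBf := hfin_f y
    have hBg := hfin_g y
    have hSv : {n : ℤ | IsBreak (⇑g) ((f ^ (n + 1)) y)}.Finite := by
      have : {n : ℤ | IsBreak (⇑g) ((f ^ (n + 1)) y)}
          = (fun n : ℤ => n + 1) ⁻¹' {n : ℤ | IsBreak (⇑g) ((f ^ n) y)} := rfl
      rw [this]
      exact hBg.preimage (add_left_injective 1).injOn
    have hS : ({n : ℤ | IsBreak (⇑f) ((f ^ n) y)} ∪
        ({n : ℤ | IsBreak (⇑g) ((f ^ n) y)} ∪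
         {n : ℤ | IsBreak (⇑g) ((f ^ (n + 1)) y)})).Finite :=
      hBf.union (hBg.union hSv)
    set s : Finset ℤ := hS.toFinset with hsdef
    have hmem_s : ∀ n : ℤ, n ∈ s ↔ (IsBreak (⇑f) ((f ^ n) y) ∨ IsBreak (⇑g) ((f ^ n) y)
        ∨ IsBreak (⇑g) ((f ^ (n + 1)) y)) := by
      intro n
      simp [hsdef, Set.Finite.mem_toFinset, Set.mem_union, or_assoc]
    -- pointwise identity
    have hpt : ∀ n : ℤ, jumpRatio (⇑f) ((f ^ n) (g y)) = u n * w (n + 1) / w n := by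
      intro n
      have h1 : (f ^ n) (g y) = g ((f ^ n) y) := by
        have := hc n 1 y
        simpa using this
      have h2 := jump_comm hr hf hg (fun x => by
        rw [← Equiv.Perm.mul_apply, ← Equiv.Perm.mul_apply, hcomm.eq]) ((f ^ n) y)
      rw [h1]
      rw [← hpow n y] at h2
      rw [eq_div_iff (hjg_pos ((f ^ n) y)).ne']
      exact h2
    -- support inclusions
    have hsupp_u : Function.mulSupport u ⊆ ↑s := by
      intro n hn
      rw [Finset.mem_coe, hmem_s]
      left
      by_contra hb
      exact hn (hjf_one _ hb)
    have hsupp_w : Function.mulSupport w ⊆ ↑s := by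
      intro n hn
      rw [Finset.mem_coe, hmem_s]
      right; left
      by_contra hb
      exact hn (hjg_one _ hb)
    have hsupp_lhs : Function.mulSupport (fun n : ℤ => jumpRatio (⇑f) ((f ^ n) (g y))) ⊆ ↑s := by
      intro n hn
      rw [Finset.mem_coe, hmem_s]
      by_contra hb
      push_neg at hb
      apply hn
      show jumpRatio (⇑f) ((f ^ n) (g y)) = 1
      rw [hpt n, show u n = 1 from hjf_one _ hb.1, show w n = 1 from hjg_one _ hb.2.1,
        show w (n + 1) = 1 from hjg_one _ hb.2.2]
      norm_num
    -- shifted finset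
    set s' : Finset ℤ := s.image (fun n => n + 1) with hs'def
    have hsupp_w' : Function.mulSupport w ⊆ ↑s' := by
      intro n hn
      have hn1 : n - 1 ∈ s := by
        rw [hmem_s]
        right; right
        have : n - 1 + 1 = n := by ring
        rw [this]
        by_contra hb
        exact hn (hjg_one _ hb)
      exact Finset.mem_coe.mpr (Finset.mem_image.mpr ⟨n - 1, hn1, by ring⟩)
    have hprod_w_ne : (∏ n ∈ s, w n) ≠ 0 :=
      Finset.prod_ne_zero_iff.mpr (fun n _ => (hjg_pos _).ne')
    calc (∏ᶠ n : ℤ, jumpRatio (⇑f) ((f ^ n) (g y)))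
        = ∏ n ∈ s, jumpRatio (⇑f) ((f ^ n) (g y)) :=
          finprod_eq_prod_of_mulSupport_subset _ hsupp_lhs
      _ = ∏ n ∈ s, (u n * w (n + 1) / w n) := Finset.prod_congr rfl (fun n _ => hpt n)
      _ = ((∏ n ∈ s, u n) * ∏ n ∈ s, w (n + 1)) / ∏ n ∈ s, w n := by
          rw [Finset.prod_div_distrib, Finset.prod_mul_distrib]
      _ = ((∏ n ∈ s, u n) * ∏ n ∈ s', w n) / ∏ n ∈ s, w n := by
          rw [Finset.prod_image (fun x _ y _ h => by omega)]
      _ = ∏ n ∈ s, u n := by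
          have e1 : ∏ n ∈ s', w n = ∏ n ∈ s, w n := by
            rw [← finprod_eq_prod_of_mulSupport_subset _ hsupp_w']
            exact finprod_eq_prod_of_mulSupport_subset _ hsupp_w
          rw [e1, mul_div_assoc, div_self hprod_w_ne, mul_one]
      _ = ∏ᶠ n : ℤ, jumpRatio (⇑f) ((f ^ n) y) :=
          (finprod_eq_prod_of_mulSupport_subset _ hsupp_u).symm
  -- iterate: D ((g^m) a) = D a
  have key2 : ∀ m : ℤ, (∏ᶠ n : ℤ, jumpRatio (⇑f) ((f ^ n) ((g ^ m) a)))
      = ∏ᶠ n : ℤ, jumpRatio (⇑f) ((f ^ n) a) := by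
    intro m
    induction m using Int.induction_on with
    | zero => simp
    | succ m ih =>
        have h1 : ∀ x, (g ^ ((m : ℤ) + 1)) x = g ((g ^ (m : ℤ)) x) := by
          intro x
          rw [add_comm, zpow_one_add, Equiv.Perm.mul_apply]
        calc (∏ᶠ n : ℤ, jumpRatio (⇑f) ((f ^ n) ((g ^ ((m : ℤ) + 1)) a)))
            = ∏ᶠ n : ℤ, jumpRatio (⇑f) ((f ^ n) (g ((g ^ (m : ℤ)) a))) := by rw [h1]
          _ = ∏ᶠ n : ℤ, jumpRatio (⇑f) ((f ^ n) ((g ^ (m : ℤ)) a)) := key _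
          _ = _ := ih
    | pred m ih =>
        have hgy : g ((g ^ (-(m : ℤ) - 1)) a) = (g ^ (-(m : ℤ))) a := by
          rw [← Equiv.Perm.mul_apply, ← zpow_one_add,
            show (1 : ℤ) + (-(m : ℤ) - 1) = -(m : ℤ) by ring]
        have hkey := key ((g ^ (-(m : ℤ) - 1)) a)
        rw [hgy] at hkey
        have hfin : ∏ᶠ (n : ℤ), jumpRatio (⇑f) ((f ^ n) ((g ^ (-(m : ℤ) - 1)) a))
            = ∏ᶠ (n : ℤ), jumpRatio (⇑f) ((f ^ n) a) := by rw [← hkey]; exact ih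
        exact hfin
  -- find good m : the 2-dim orbit is free
  have horb2 : ∀ (p q : ℤ × ℤ) (k : ℤ),
      (f ^ p.1) ((g ^ p.2) a) = (f ^ q.1) ((g ^ q.2) a) + k * r → p = q := by
    intro p q k h
    by_contra hpq
    have hne : ¬(p.1 - q.1 = 0 ∧ p.2 - q.2 = 0) := by
      intro ⟨h1, h2⟩
      exact hpq (Prod.ext (by omega) (by omega))
    apply hfree (p.1 - q.1) (p.2 - q.2) hne ((f ^ q.1) ((g ^ q.2) a)) k
    have e1 : (f ^ (p.1 - q.1) * g ^ (p.2 - q.2)) ((f ^ q.1) ((g ^ q.2) a))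
        = (f ^ p.1) ((g ^ p.2) a) := by
      rw [Equiv.Perm.mul_apply, ← hc q.1 (p.2 - q.2),
        ← Equiv.Perm.mul_apply (g ^ (p.2 - q.2)), ← zpow_add,
        show p.2 - q.2 + q.2 = p.2 by ring,
        ← Equiv.Perm.mul_apply (f ^ (p.1 - q.1)), ← zpow_add,
        show p.1 - q.1 + q.1 = p.1 by ring]
    rw [e1, h]
  have h2d : {p : ℤ × ℤ | IsBreak (⇑f) ((f ^ p.1) ((g ^ p.2) a))}.Finite :=
    orbit_breaks_finite hr Nf hNf_fin hNf_br (fun p : ℤ × ℤ => (f ^ p.1) ((g ^ p.2) a)) horb2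
  have hMfin : (Prod.snd '' {p : ℤ × ℤ | IsBreak (⇑f) ((f ^ p.1) ((g ^ p.2) a))}).Finite :=
    h2d.image _
  obtain ⟨m, hm⟩ := hMfin.infinite_compl.nonempty
  have hgood : ∀ n : ℤ, ¬ IsBreak (⇑f) ((f ^ n) ((g ^ m) a)) := by
    intro n hn
    exact hm ⟨(n, m), hn, rfl⟩
  rw [← key2 m]
  rw [finprod_congr (fun n => hjf_one _ (hgood n))]
  exact finprod_one
end
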